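/- arXiv:2305.01450 — 3 statements merged into one kernel-verified Lean document; each statement's English description precedes it below -/
import Mathlib

section
/- Let L be a finite set of d distinct lines in the complex projective plane ℙ²(ℂ), with d ≥ 5, and assume that no point of ℙ²(ℂ) lies on at least d−1 of the lines of L. Then the total Milnor number of the arrangement satisfies μ(L) = Σ_p (m_p − 1)² ≤ d² − 4d + 7, where the sum runs over all points p lying on at least two lines of L; equivalently, (d−1)(d−2) + 1 − μ(L) ≥ d − 4 ≥ 1. -/
open Module Finset

/- The number of lines of the arrangement `L` passing through the point `p` of the
complex projective plane. Lines in `ℙ²(ℂ)` are identified with `2`-dimensional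
linear subspaces of `ℂ³`, and a point lies on a line iff the line (as a subspace)
contains the `1`-dimensional subspace attached to the point. -/
open Classical in
noncomputable def lineMult (L : Finset (Submodule ℂ (Fin 3 → ℂ)))
    (p : Projectivization ℂ (Fin 3 → ℂ)) : ℕ :=
  (L.filter fun W => p.submodule ≤ W).card

private lemma inf_rank_one {W₁ W₂ : Submodule ℂ (Fin 3 → ℂ)}
    (h1 : finrank ℂ W₁ = 2) (h2 : finrank ℂ W₂ = 2) (hne : W₁ ≠ W₂) :
    finrank ℂ (W₁ ⊓ W₂ : Submodule ℂ (Fin 3 → ℂ)) = 1 := by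
  have hdim : finrank ℂ (Fin 3 → ℂ) = 3 := by simp
  have hkey := Submodule.finrank_sup_add_finrank_inf_eq W₁ W₂
  have hle3 : finrank ℂ (W₁ ⊔ W₂ : Submodule ℂ (Fin 3 → ℂ)) ≤ 3 :=
    le_trans (Submodule.finrank_le _) (le_of_eq hdim)
  have hlt : finrank ℂ W₁ < finrank ℂ (W₁ ⊔ W₂ : Submodule ℂ (Fin 3 → ℂ)) := by
    apply Submodule.finrank_lt_finrank_of_lt
    refine lt_of_le_of_ne le_sup_left fun h => hne ?_
    exact (Submodule.eq_of_le_of_finrank_eq (h ▸ le_sup_right : W₂ ≤ W₁) (by rw [h1, h2])).symm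
  omega

/-- The intersection point of two lines. -/
noncomputable def interPt (W₁ W₂ : Submodule ℂ (Fin 3 → ℂ)) :
    Projectivization ℂ (Fin 3 → ℂ) :=
  if h : finrank ℂ (W₁ ⊓ W₂ : Submodule ℂ (Fin 3 → ℂ)) = 1 then Projectivization.mk'' _ h
  else Projectivization.mk ℂ (fun _ => 1) (by
    intro h; have := congrFun h 0; simp at this)

private lemma interPt_submodule {W₁ W₂ : Submodule ℂ (Fin 3 → ℂ)}
    (h : finrank ℂ (W₁ ⊓ W₂ : Submodule ℂ (Fin 3 → ℂ)) = 1) :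
    (interPt W₁ W₂).submodule = W₁ ⊓ W₂ := by
  rw [interPt, dif_pos h, Projectivization.submodule_mk'']

private lemma eq_interPt {W₁ W₂ : Submodule ℂ (Fin 3 → ℂ)}
    {p : Projectivization ℂ (Fin 3 → ℂ)}
    (h : finrank ℂ (W₁ ⊓ W₂ : Submodule ℂ (Fin 3 → ℂ)) = 1)
    (h1 : p.submodule ≤ W₁) (h2 : p.submodule ≤ W₂) : p = interPt W₁ W₂ := by
  apply Projectivization.submodule_injective
  rw [interPt_submodule h]
  exact Submodule.eq_of_le_of_finrank_eq (le_inf h1 h2)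
    (by rw [p.finrank_submodule, h])

/-- Let `L` be a finite set of `d` distinct lines in `ℙ²(ℂ)`, `d ≥ 5`,
such that no point lies on at least `d - 1` of the lines. Then the set of points lying
on at least two lines is finite and the total Milnor number
`μ(L) = Σ_p (m_p - 1)²` (sum over points on at least two lines) satisfies
`μ(L) ≤ d² - 4d + 7`; equivalently `(d-1)(d-2) + 1 - μ(L) ≥ d - 4 ≥ 1`. -/
theorem stmt_0 (d : ℕ) (hd : 5 ≤ d)
    (L : Finset (Submodule ℂ (Fin 3 → ℂ)))
    (hlines : ∀ W ∈ L, Module.finrank ℂ W = 2)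
    (hcard : L.card = d)
    (hmult : ∀ p : Projectivization ℂ (Fin 3 → ℂ), lineMult L p < d - 1) :
    ∃ P : Finset (Projectivization ℂ (Fin 3 → ℂ)),
      (∀ p, p ∈ P ↔ 2 ≤ lineMult L p) ∧
      (∑ p ∈ P, ((lineMult L p : ℤ) - 1) ^ 2 ≤ (d : ℤ) ^ 2 - 4 * d + 7) ∧
      ((d : ℤ) - 1) * ((d : ℤ) - 2) + 1 - ∑ p ∈ P, ((lineMult L p : ℤ) - 1) ^ 2
        ≥ (d : ℤ) - 4 ∧ (d : ℤ) - 4 ≥ 1 := by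
  classical
  have hrk : ∀ W₁ ∈ L, ∀ W₂ ∈ L, W₁ ≠ W₂ →
      finrank ℂ (W₁ ⊓ W₂ : Submodule ℂ (Fin 3 → ℂ)) = 1 := fun W₁ h1 W₂ h2 hne =>
    inf_rank_one (hlines _ h1) (hlines _ h2) hne
  set P : Finset (Projectivization ℂ (Fin 3 → ℂ)) :=
    L.offDiag.image (fun w => interPt w.1 w.2) with hPdef
  -- membership characterization
  have hP : ∀ p, p ∈ P ↔ 2 ≤ lineMult L p := by
    intro p
    constructor
    · rintro hp
      rw [hPdef, mem_image] at hp
      obtain ⟨w, hw, rfl⟩ := hp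
      rw [mem_offDiag] at hw
      obtain ⟨hw1, hw2, hwne⟩ := hw
      have hr := hrk _ hw1 _ hw2 hwne
      have hsub := interPt_submodule hr
      rw [lineMult]
      exact Finset.one_lt_card.2 ⟨w.1, mem_filter.2 ⟨hw1, hsub.le.trans inf_le_left⟩,
        w.2, mem_filter.2 ⟨hw2, hsub.le.trans inf_le_right⟩, hwne⟩
    · intro hp
      rw [lineMult] at hp
      rw [show (2 ≤ #(L.filter fun W => p.submodule ≤ W)) = (1 < #(L.filter fun W => p.submodule ≤ W)) from rfl,
        Finset.one_lt_card] at hp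
      obtain ⟨W₁, hW₁, W₂, hW₂, hne⟩ := hp
      rw [mem_filter] at hW₁ hW₂
      have hr := hrk _ hW₁.1 _ hW₂.1 hne
      rw [hPdef, mem_image]
      exact ⟨(W₁, W₂), mem_offDiag.2 ⟨hW₁.1, hW₂.1, hne⟩,
        (eq_interPt hr hW₁.2 hW₂.2).symm⟩
  refine ⟨P, hP, ?_⟩
  -- the member of P lying on a line W₁ ≠ W₂
  -- Global double count: ∑_{p ∈ P} m_p * m_p - m_p = d*d - d
  have hglobal : ∑ p ∈ P, (lineMult L p * lineMult L p - lineMult L p) = d * d - d := by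
    have hmap : ∀ w ∈ L.offDiag, interPt w.1 w.2 ∈ P := fun w hw =>
      mem_image.2 ⟨w, hw, rfl⟩
    have := Finset.card_eq_sum_card_fiberwise hmap
    rw [Finset.offDiag_card, hcard] at this
    rw [this]
    apply Finset.sum_congr rfl
    intro p hp
    have hfib : L.offDiag.filter (fun w => interPt w.1 w.2 = p)
        = (L.filter fun W => p.submodule ≤ W).offDiag := by
      ext w
      simp only [mem_filter, mem_offDiag]
      constructor
      · rintro ⟨⟨hw1, hw2, hne⟩, rfl⟩
        have hsub := interPt_submodule (hrk _ hw1 _ hw2 hne)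
        exact ⟨⟨hw1, hsub.le.trans inf_le_left⟩, ⟨hw2, hsub.le.trans inf_le_right⟩, hne⟩
      · rintro ⟨⟨hw1, hp1⟩, ⟨hw2, hp2⟩, hne⟩
        exact ⟨⟨hw1, hw2, hne⟩, (eq_interPt (hrk _ hw1 _ hw2 hne) hp1 hp2).symm⟩
    rw [hfib, Finset.offDiag_card, lineMult]
  -- Per-line count: for ℓ ∈ L, ∑_{p ∈ P, p on ℓ} (m_p - 1) = d - 1
  have hline : ∀ ℓ ∈ L, ∑ p ∈ P.filter (fun p => p.submodule ≤ ℓ), (lineMult L p - 1)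
      = d - 1 := by
    intro ℓ hℓ
    have hmap : ∀ W ∈ L.erase ℓ, interPt ℓ W ∈ P.filter (fun p => p.submodule ≤ ℓ) := by
      intro W hW
      rw [mem_erase] at hW
      have hr := hrk _ hℓ _ hW.2 (Ne.symm hW.1)
      refine mem_filter.2 ⟨mem_image.2 ⟨(ℓ, W), mem_offDiag.2 ⟨hℓ, hW.2, Ne.symm hW.1⟩, rfl⟩, ?_⟩
      exact (interPt_submodule hr).le.trans inf_le_left
    have := Finset.card_eq_sum_card_fiberwise hmap
    rw [Finset.card_erase_of_mem hℓ, hcard] at this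
    rw [this]
    apply Finset.sum_congr rfl
    intro p hp
    rw [mem_filter] at hp
    have hpl : p.submodule ≤ ℓ := hp.2
    have hfib : (L.erase ℓ).filter (fun W => interPt ℓ W = p)
        = (L.filter fun W => p.submodule ≤ W).erase ℓ := by
      ext W
      simp only [mem_filter, mem_erase]
      constructor
      · rintro ⟨⟨hne, hW⟩, rfl⟩
        have hsub := interPt_submodule (hrk _ hℓ _ hW (Ne.symm hne))
        exact ⟨hne, hW, hsub.le.trans inf_le_right⟩
      · rintro ⟨hne, hW, hpW⟩
        exact ⟨⟨hne, hW⟩, (eq_interPt (hrk _ hℓ _ hW (Ne.symm hne)) hpl hpW).symm⟩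
    rw [hfib, Finset.card_erase_of_mem (mem_filter.2 ⟨hℓ, hpl⟩), lineMult]
  set N : ℕ := ∑ p ∈ P, (lineMult L p - 1) with hNdef
  -- Key inequality : N ≥ 3d - 7 (as integers)
  have hNZ : (3 : ℤ) * d - 7 ≤ (N : ℤ) := by
    by_cases hcase : ∃ q ∈ P, 3 ≤ lineMult L q
    · obtain ⟨q, hq, hq3⟩ := hcase
      set m : ℕ := lineMult L q with hmdef
      have hmd : m ≤ d - 2 := by have := hmult q; omega
      set Pen : Finset (Submodule ℂ (Fin 3 → ℂ)) := L.filter (fun W => q.submodule ≤ W)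
        with hPen
      have hPencard : Pen.card = m := rfl
      -- per pencil line, the other points contribute d - m
      have hSsum : ∀ ℓ ∈ Pen, ∑ p ∈ (P.filter (fun p => p.submodule ≤ ℓ)).erase q,
          (lineMult L p - 1) = d - m := by
        intro ℓ hℓ
        rw [mem_filter] at hℓ
        have hqmem : q ∈ P.filter (fun p => p.submodule ≤ ℓ) := mem_filter.2 ⟨hq, hℓ.2⟩
        have h1 : (lineMult L q - 1) + ∑ p ∈ (P.filter (fun p => p.submodule ≤ ℓ)).erase q,
            (lineMult L p - 1) = ∑ p ∈ P.filter (fun p => p.submodule ≤ ℓ), (lineMult L p - 1) :=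
          Finset.add_sum_erase _ (fun p => lineMult L p - 1) hqmem
        rw [hline ℓ hℓ.1] at h1
        have hqm : lineMult L q = m := rfl
        omega
      -- points of distinct pencil lines (other than q) are distinct
      have hdisj : (Pen : Set (Submodule ℂ (Fin 3 → ℂ))).PairwiseDisjoint
          (fun ℓ => (P.filter (fun p => p.submodule ≤ ℓ)).erase q) := by
        intro ℓ₁ h₁ ℓ₂ h₂ hne
        simp only [Finset.mem_coe, hPen, mem_filter] at h₁ h₂
        simp only [Function.onFun]
        rw [Finset.disjoint_left]
        intro p hp₁ hp₂
        rw [mem_erase, mem_filter] at hp₁ hp₂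
        have hr := hrk _ h₁.1 _ h₂.1 hne
        apply hp₁.1
        have hps : p.submodule = ℓ₁ ⊓ ℓ₂ :=
          Submodule.eq_of_le_of_finrank_eq (le_inf hp₁.2.2 hp₂.2.2)
            (by rw [p.finrank_submodule, hr])
        have hqs : q.submodule = ℓ₁ ⊓ ℓ₂ :=
          Submodule.eq_of_le_of_finrank_eq (le_inf h₁.2 h₂.2)
            (by rw [q.finrank_submodule, hr])
        exact Projectivization.submodule_injective (hps.trans hqs.symm)
      set T : Finset (Projectivization ℂ (Fin 3 → ℂ)) :=
        Pen.biUnion (fun ℓ => (P.filter (fun p => p.submodule ≤ ℓ)).erase q) with hT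
      have hqT : q ∉ T := by
        simp only [hT, mem_biUnion]
        rintro ⟨ℓ, -, hq'⟩
        exact (mem_erase.1 hq').1 rfl
      have hTsum : ∑ p ∈ T, (lineMult L p - 1) = m * (d - m) := by
        rw [hT, Finset.sum_biUnion hdisj]
        rw [Finset.sum_congr rfl hSsum, Finset.sum_const, hPencard, smul_eq_mul]
      have hsub : insert q T ⊆ P := by
        intro p hp
        rcases Finset.mem_insert.1 hp with rfl | hp
        · exact hq
        · simp only [hT, mem_biUnion] at hp
          obtain ⟨ℓ, -, hp⟩ := hp
          exact (mem_filter.1 (mem_erase.1 hp).2).1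
      have hle : (m - 1) + m * (d - m) ≤ N := by
        calc (m - 1) + m * (d - m) = ∑ p ∈ insert q T, (lineMult L p - 1) := by
              rw [Finset.sum_insert hqT, hTsum]
            _ ≤ N := Finset.sum_le_sum_of_subset hsub
      have h2m : 2 ≤ m := by omega
      have hmd' : m + 2 ≤ d := by omega
      have hcast : ((m : ℤ) - 1) + (m : ℤ) * ((d : ℤ) - m) ≤ (N : ℤ) := by
        have := hle
        zify [(by omega : 1 ≤ m), (by omega : m ≤ d)] at this
        exact this
      have h3 : (3 : ℤ) ≤ (m : ℤ) := by exact_mod_cast hq3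
      have hd2 : (m : ℤ) ≤ (d : ℤ) - 2 := by
        have : (m : ℤ) + 2 ≤ d := by exact_mod_cast hmd'
        omega
      nlinarith [hcast, h3, hd2]
    · -- all multiplicities equal 2
      push_neg at hcase
      have hall : ∀ p ∈ P, lineMult L p = 2 := by
        intro p hp
        have h2 := (hP p).1 hp
        have h3 := hcase p hp
        omega
      have h2N : 2 * N = d * d - d := by
        rw [← hglobal, hNdef, Finset.mul_sum]
        apply Finset.sum_congr rfl
        intro p hp
        rw [hall p hp]
        omega
      have hdd : d ≤ d * d := Nat.le_mul_of_pos_left d (by omega)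
      have : (2 : ℤ) * N = (d : ℤ) * d - d := by
        have := h2N
        zify [hdd] at this
        exact this
      nlinarith [this, (by exact_mod_cast hd : (5:ℤ) ≤ (d:ℤ))]
  -- convert the sum of squares
  have hμ : ∑ p ∈ P, ((lineMult L p : ℤ) - 1) ^ 2
      = ((d * d - d : ℕ) : ℤ) - (N : ℤ) := by
    rw [← hglobal, hNdef, Nat.cast_sum, Nat.cast_sum, ← Finset.sum_sub_distrib]
    apply Finset.sum_congr rfl
    intro p hp
    have h2 := (hP p).1 hp
    have h1 : p ∈ P → lineMult L p ≤ lineMult L p * lineMult L p :=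
      fun _ => Nat.le_mul_of_pos_left _ (by omega)
    rw [Nat.cast_sub (h1 hp), Nat.cast_sub (by omega : 1 ≤ lineMult L p)]
    push_cast
    ring
  have hdd : d ≤ d * d := Nat.le_mul_of_pos_left d (by omega)
  have hcastdd : ((d * d - d : ℕ) : ℤ) = (d : ℤ) * d - d := by
    zify [hdd]
  have hd5 : (5 : ℤ) ≤ (d : ℤ) := by exact_mod_cast hd
  rw [hμ, hcastdd]
  refine ⟨by nlinarith, by nlinarith, by omega⟩
end

section
/- Let f = x·(x−z)·(xy−z²)·(x²−xz+xy−z²) ∈ ℂ[x,y,z], a reduced homogeneous polynomial of degree 6 defining the conic-line arrangement obtained from a pencil of conics of Type III by taking the 2 lines coming from the unique singular conic in the pencil together with two smooth members. Then the curve C : f = 0 is free with exponents (2,3): the module of Jacobian syzygies D₀(f) is a free ℂ[x,y,z]-module admitting a basis consisting of two homogeneous syzygies, one of degree 2 and one of degree 3. -/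
open MvPolynomial

/-- `v` is a Jacobian syzygy of `f`, i.e. an element of `D₀(f)`:
`v 0 · ∂f/∂x + v 1 · ∂f/∂y + v 2 · ∂f/∂z = 0`. -/
def IsSyzygy (f : MvPolynomial (Fin 3) ℂ) (v : Fin 3 → MvPolynomial (Fin 3) ℂ) : Prop :=
  v 0 * pderiv 0 f + v 1 * pderiv 1 f + v 2 * pderiv 2 f = 0

/-- A triple of polynomials is homogeneous of degree `r` if all three components are. -/
def IsHomTriple (v : Fin 3 → MvPolynomial (Fin 3) ℂ) (r : ℕ) : Prop :=
  ∀ i, (v i).IsHomogeneous r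

/-- The reduced curve `C : f = 0` of degree `d` is free with exponents `(d₁, d₂)`:
`D₀(f)` is a free module with a basis consisting of two homogeneous syzygies of degrees
`d₁` and `d₂` (every syzygy is uniquely a combination of the two basis elements). -/
def IsFreeWithExponents (f : MvPolynomial (Fin 3) ℂ) (d₁ d₂ : ℕ) : Prop :=
  ∃ r₁ r₂ : Fin 3 → MvPolynomial (Fin 3) ℂ,
    IsSyzygy f r₁ ∧ IsSyzygy f r₂ ∧ IsHomTriple r₁ d₁ ∧ IsHomTriple r₂ d₂ ∧
    ∀ v, IsSyzygy f v →
      ∃! ab : MvPolynomial (Fin 3) ℂ × MvPolynomial (Fin 3) ℂ,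
        v = ab.1 • r₁ + ab.2 • r₂

namespace Stmt5Aux

noncomputable section

abbrev P3 : Type := MvPolynomial (Fin 3) ℂ

lemma homTerm {n : ℕ} (r : ℂ) (i j k : ℕ) (h : i + j + k = n) :
    IsHomogeneous (C r * (X 0 ^ i * X 1 ^ j * X 2 ^ k) : P3) n := by
  subst h
  simpa using IsHomogeneous.mul (isHomogeneous_C _ r)
    (IsHomogeneous.mul (IsHomogeneous.mul (isHomogeneous_X_pow 0 i) (isHomogeneous_X_pow 1 j))
      (isHomogeneous_X_pow 2 k))

lemma primeL : Prime ((X 0 - X 2 : P3)) := by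
  have hX0 : Prime ((X 0 : P3)) := by
    rw [← MulEquiv.prime_iff (finSuccEquiv ℂ 2).toMulEquiv]
    simpa [finSuccEquiv_X_zero] using (Polynomial.prime_X (R := MvPolynomial (Fin 2) ℂ))
  have h1 : (aeval ![X 0 - X 2, X 1, X 2] : P3 →ₐ[ℂ] P3).comp
      (aeval ![X 0 + X 2, X 1, X 2] : P3 →ₐ[ℂ] P3) = AlgHom.id ℂ P3 := by
    apply MvPolynomial.algHom_ext
    intro i
    fin_cases i <;> simp
  have h2 : (aeval ![X 0 + X 2, X 1, X 2] : P3 →ₐ[ℂ] P3).comp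
      (aeval ![X 0 - X 2, X 1, X 2] : P3 →ₐ[ℂ] P3) = AlgHom.id ℂ P3 := by
    apply MvPolynomial.algHom_ext
    intro i
    fin_cases i <;> simp
  have := (MulEquiv.prime_iff (AlgEquiv.ofAlgHom _ _ h1 h2).toMulEquiv).mpr hX0
  simpa using this

end

end Stmt5Aux

open Stmt5Aux

set_option maxHeartbeats 4000000 in
set_option maxRecDepth 100000 in
/-- The conic-line arrangement
`C : x·(x−z)·(xy−z²)·(x²−xz+xy−z²) = 0`, obtained from a pencil of conics of Type III
by taking the 2 lines coming from the unique singular conic together with two smooth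
members, is a free curve with exponents `(2, 3)`. -/
theorem stmt_5 :
    IsFreeWithExponents
      (X 0 * (X 0 - X 2) * (X 0 * X 1 - X 2 ^ 2) *
        (X 0 ^ 2 - X 0 * X 2 + X 0 * X 1 - X 2 ^ 2)) 2 3 := by
  have hF0 : pderiv 0 (X 0 * (X 0 - X 2) * (X 0 * X 1 - X 2 ^ 2) *
      (X 0 ^ 2 - X 0 * X 2 + X 0 * X 1 - X 2 ^ 2) : P3) = (5 * X 0 ^ 4 * X 1 + 4 * X 0 ^ 3 * X 1 ^ 2 - 8 * X 0 ^ 3 * X 1 * X 2 - 4 * X 0 ^ 3 * X 2 ^ 2 - 3 * X 0 ^ 2 * X 1 ^ 2 * X 2 - 3 * X 0 ^ 2 * X 1 * X 2 ^ 2 + 6 * X 0 ^ 2 * X 2 ^ 3 + 4 * X 0 * X 1 * X 2 ^ 3 - X 2 ^ 5) := by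
    simp only [pderiv_mul, pderiv_pow, map_sub, map_add, pderiv_X_self,
      pderiv_X_of_ne (show (1 : Fin 3) ≠ 0 by decide),
      pderiv_X_of_ne (show (2 : Fin 3) ≠ 0 by decide)]
    ring
  have hF1 : pderiv 1 (X 0 * (X 0 - X 2) * (X 0 * X 1 - X 2 ^ 2) *
      (X 0 ^ 2 - X 0 * X 2 + X 0 * X 1 - X 2 ^ 2) : P3) = (X 0 ^ 5 + 2 * X 0 ^ 4 * X 1 - 2 * X 0 ^ 4 * X 2 - 2 * X 0 ^ 3 * X 1 * X 2 - X 0 ^ 3 * X 2 ^ 2 + 2 * X 0 ^ 2 * X 2 ^ 3) := by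
    simp only [pderiv_mul, pderiv_pow, map_sub, map_add, pderiv_X_self,
      pderiv_X_of_ne (show (0 : Fin 3) ≠ 1 by decide),
      pderiv_X_of_ne (show (2 : Fin 3) ≠ 1 by decide)]
    ring
  have hF2 : pderiv 2 (X 0 * (X 0 - X 2) * (X 0 * X 1 - X 2 ^ 2) *
      (X 0 ^ 2 - X 0 * X 2 + X 0 * X 1 - X 2 ^ 2) : P3) = (-2 * X 0 ^ 4 * X 1 - 2 * X 0 ^ 4 * X 2 - X 0 ^ 3 * X 1 ^ 2 - 2 * X 0 ^ 3 * X 1 * X 2 + 6 * X 0 ^ 3 * X 2 ^ 2 + 6 * X 0 ^ 2 * X 1 * X 2 ^ 2 - 5 * X 0 * X 2 ^ 4) := by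
    simp only [pderiv_mul, pderiv_pow, map_sub, map_add, pderiv_X_self,
      pderiv_X_of_ne (show (0 : Fin 3) ≠ 2 by decide),
      pderiv_X_of_ne (show (1 : Fin 3) ≠ 2 by decide)]
    ring
  -- evaluation helpers
  have hF0ne : ((5 * X 0 ^ 4 * X 1 + 4 * X 0 ^ 3 * X 1 ^ 2 - 8 * X 0 ^ 3 * X 1 * X 2 - 4 * X 0 ^ 3 * X 2 ^ 2 - 3 * X 0 ^ 2 * X 1 ^ 2 * X 2 - 3 * X 0 ^ 2 * X 1 * X 2 ^ 2 + 6 * X 0 ^ 2 * X 2 ^ 3 + 4 * X 0 * X 1 * X 2 ^ 3 - X 2 ^ 5) : P3) ≠ 0 := by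
    intro h
    have := congrArg (eval (![1, 0, 1] : Fin 3 → ℂ)) h
    simp at this
    all_goals norm_num at this
  have hF1ne : ((X 0 ^ 5 + 2 * X 0 ^ 4 * X 1 - 2 * X 0 ^ 4 * X 2 - 2 * X 0 ^ 3 * X 1 * X 2 - X 0 ^ 3 * X 2 ^ 2 + 2 * X 0 ^ 2 * X 2 ^ 3) : P3) ≠ 0 := by
    intro h
    have := congrArg (eval (![1, 0, 0] : Fin 3 → ℂ)) h
    simp at this
    all_goals norm_num at this
  have hLne : ((X 0 - X 2 : P3)) ≠ 0 := by
    intro h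
    have := congrArg (eval (![1, 0, 0] : Fin 3 → ℂ)) h
    simp at this
    all_goals norm_num at this
  have hnd : ¬ ((X 0 - X 2 : P3) ∣ (5 * X 0 ^ 4 * X 1 + 4 * X 0 ^ 3 * X 1 ^ 2 - 8 * X 0 ^ 3 * X 1 * X 2 - 4 * X 0 ^ 3 * X 2 ^ 2 - 3 * X 0 ^ 2 * X 1 ^ 2 * X 2 - 3 * X 0 ^ 2 * X 1 * X 2 ^ 2 + 6 * X 0 ^ 2 * X 2 ^ 3 + 4 * X 0 * X 1 * X 2 ^ 3 - X 2 ^ 5)) := by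
    rintro ⟨t, ht⟩
    have := congrArg (eval (![1, 0, 1] : Fin 3 → ℂ)) ht
    simp at this
    all_goals norm_num at this
  refine ⟨![(X 0 ^ 2), (-X 0 * X 1 + 4 * X 0 * X 2 - 2 * X 2 ^ 2), (2 * X 0 ^ 2 - X 0 * X 2)], ![(2 * X 0 ^ 3 + 4 * X 0 ^ 2 * X 1 - 3 * X 0 ^ 2 * X 2 - 10 * X 0 * X 2 ^ 2), (-10 * X 0 ^ 2 * X 1 - 8 * X 0 * X 1 ^ 2 + 11 * X 0 * X 1 * X 2 + 8 * X 0 * X 2 ^ 2 + 26 * X 1 * X 2 ^ 2 - 34 * X 2 ^ 3), (4 * X 0 * X 1 * X 2 - 13 * X 0 * X 2 ^ 2 + 2 * X 2 ^ 3)], ?_, ?_, ?_, ?_, ?_⟩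
  · show _ * _ + _ * _ + _ * _ = 0
    rw [hF0, hF1, hF2]
    simp only [Matrix.cons_val_zero, Matrix.cons_val_one, Matrix.head_cons,
      Matrix.cons_val_two, Matrix.tail_cons]
    ring
  · show _ * _ + _ * _ + _ * _ = 0
    rw [hF0, hF1, hF2]
    simp only [Matrix.cons_val_zero, Matrix.cons_val_one, Matrix.head_cons,
      Matrix.cons_val_two, Matrix.tail_cons]
    ring
  · intro i
    have hhomR10 : ((X 0 ^ 2) : MvPolynomial (Fin 3) ℂ).IsHomogeneous 2 := by
      rw [show ((X 0 ^ 2) : MvPolynomial (Fin 3) ℂ) = C ((1:ℂ)) * (X 0 ^ 2 * X 1 ^ 0 * X 2 ^ 0) by simp only [map_neg, map_one, map_ofNat]; ring]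
      exact (homTerm (1:ℂ) 2 0 0 (by norm_num))
    have hhomR11 : ((-X 0 * X 1 + 4 * X 0 * X 2 - 2 * X 2 ^ 2) : MvPolynomial (Fin 3) ℂ).IsHomogeneous 2 := by
      rw [show ((-X 0 * X 1 + 4 * X 0 * X 2 - 2 * X 2 ^ 2) : MvPolynomial (Fin 3) ℂ) = C ((-1:ℂ)) * (X 0 ^ 1 * X 1 ^ 1 * X 2 ^ 0) + C ((4:ℂ)) * (X 0 ^ 1 * X 1 ^ 0 * X 2 ^ 1) + C ((-2:ℂ)) * (X 0 ^ 0 * X 1 ^ 0 * X 2 ^ 2) by simp only [map_neg, map_one, map_ofNat]; ring]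
      exact (IsHomogeneous.add (IsHomogeneous.add (homTerm (-1:ℂ) 1 1 0 (by norm_num)) (homTerm (4:ℂ) 1 0 1 (by norm_num))) (homTerm (-2:ℂ) 0 0 2 (by norm_num)))
    have hhomR12 : ((2 * X 0 ^ 2 - X 0 * X 2) : MvPolynomial (Fin 3) ℂ).IsHomogeneous 2 := by
      rw [show ((2 * X 0 ^ 2 - X 0 * X 2) : MvPolynomial (Fin 3) ℂ) = C ((2:ℂ)) * (X 0 ^ 2 * X 1 ^ 0 * X 2 ^ 0) + C ((-1:ℂ)) * (X 0 ^ 1 * X 1 ^ 0 * X 2 ^ 1) by simp only [map_neg, map_one, map_ofNat]; ring]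
      exact (IsHomogeneous.add (homTerm (2:ℂ) 2 0 0 (by norm_num)) (homTerm (-1:ℂ) 1 0 1 (by norm_num)))
    have hhomR20 : ((2 * X 0 ^ 3 + 4 * X 0 ^ 2 * X 1 - 3 * X 0 ^ 2 * X 2 - 10 * X 0 * X 2 ^ 2) : MvPolynomial (Fin 3) ℂ).IsHomogeneous 3 := by
      rw [show ((2 * X 0 ^ 3 + 4 * X 0 ^ 2 * X 1 - 3 * X 0 ^ 2 * X 2 - 10 * X 0 * X 2 ^ 2) : MvPolynomial (Fin 3) ℂ) = C ((2:ℂ)) * (X 0 ^ 3 * X 1 ^ 0 * X 2 ^ 0) + C ((4:ℂ)) * (X 0 ^ 2 * X 1 ^ 1 * X 2 ^ 0) + C ((-3:ℂ)) * (X 0 ^ 2 * X 1 ^ 0 * X 2 ^ 1) + C ((-10:ℂ)) * (X 0 ^ 1 * X 1 ^ 0 * X 2 ^ 2) by simp only [map_neg, map_one, map_ofNat]; ring]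
      exact (IsHomogeneous.add (IsHomogeneous.add (IsHomogeneous.add (homTerm (2:ℂ) 3 0 0 (by norm_num)) (homTerm (4:ℂ) 2 1 0 (by norm_num))) (homTerm (-3:ℂ) 2 0 1 (by norm_num))) (homTerm (-10:ℂ) 1 0 2 (by norm_num)))
    have hhomR21 : ((-10 * X 0 ^ 2 * X 1 - 8 * X 0 * X 1 ^ 2 + 11 * X 0 * X 1 * X 2 + 8 * X 0 * X 2 ^ 2 + 26 * X 1 * X 2 ^ 2 - 34 * X 2 ^ 3) : MvPolynomial (Fin 3) ℂ).IsHomogeneous 3 := by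
      rw [show ((-10 * X 0 ^ 2 * X 1 - 8 * X 0 * X 1 ^ 2 + 11 * X 0 * X 1 * X 2 + 8 * X 0 * X 2 ^ 2 + 26 * X 1 * X 2 ^ 2 - 34 * X 2 ^ 3) : MvPolynomial (Fin 3) ℂ) = C ((-10:ℂ)) * (X 0 ^ 2 * X 1 ^ 1 * X 2 ^ 0) + C ((-8:ℂ)) * (X 0 ^ 1 * X 1 ^ 2 * X 2 ^ 0) + C ((11:ℂ)) * (X 0 ^ 1 * X 1 ^ 1 * X 2 ^ 1) + C ((8:ℂ)) * (X 0 ^ 1 * X 1 ^ 0 * X 2 ^ 2) + C ((26:ℂ)) * (X 0 ^ 0 * X 1 ^ 1 * X 2 ^ 2) + C ((-34:ℂ)) * (X 0 ^ 0 * X 1 ^ 0 * X 2 ^ 3) by simp only [map_neg, map_one, map_ofNat]; ring]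
      exact (IsHomogeneous.add (IsHomogeneous.add (IsHomogeneous.add (IsHomogeneous.add (IsHomogeneous.add (homTerm (-10:ℂ) 2 1 0 (by norm_num)) (homTerm (-8:ℂ) 1 2 0 (by norm_num))) (homTerm (11:ℂ) 1 1 1 (by norm_num))) (homTerm (8:ℂ) 1 0 2 (by norm_num))) (homTerm (26:ℂ) 0 1 2 (by norm_num))) (homTerm (-34:ℂ) 0 0 3 (by norm_num)))
    have hhomR22 : ((4 * X 0 * X 1 * X 2 - 13 * X 0 * X 2 ^ 2 + 2 * X 2 ^ 3) : MvPolynomial (Fin 3) ℂ).IsHomogeneous 3 := by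
      rw [show ((4 * X 0 * X 1 * X 2 - 13 * X 0 * X 2 ^ 2 + 2 * X 2 ^ 3) : MvPolynomial (Fin 3) ℂ) = C ((4:ℂ)) * (X 0 ^ 1 * X 1 ^ 1 * X 2 ^ 1) + C ((-13:ℂ)) * (X 0 ^ 1 * X 1 ^ 0 * X 2 ^ 2) + C ((2:ℂ)) * (X 0 ^ 0 * X 1 ^ 0 * X 2 ^ 3) by simp only [map_neg, map_one, map_ofNat]; ring]
      exact (IsHomogeneous.add (IsHomogeneous.add (homTerm (4:ℂ) 1 1 1 (by norm_num)) (homTerm (-13:ℂ) 1 0 2 (by norm_num))) (homTerm (2:ℂ) 0 0 3 (by norm_num)))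
    fin_cases i
    · simpa using hhomR10
    · simpa using hhomR11
    · simpa using hhomR12
  · intro i
    have hhomR10 : ((X 0 ^ 2) : MvPolynomial (Fin 3) ℂ).IsHomogeneous 2 := by
      rw [show ((X 0 ^ 2) : MvPolynomial (Fin 3) ℂ) = C ((1:ℂ)) * (X 0 ^ 2 * X 1 ^ 0 * X 2 ^ 0) by simp only [map_neg, map_one, map_ofNat]; ring]
      exact (homTerm (1:ℂ) 2 0 0 (by norm_num))
    have hhomR11 : ((-X 0 * X 1 + 4 * X 0 * X 2 - 2 * X 2 ^ 2) : MvPolynomial (Fin 3) ℂ).IsHomogeneous 2 := by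
      rw [show ((-X 0 * X 1 + 4 * X 0 * X 2 - 2 * X 2 ^ 2) : MvPolynomial (Fin 3) ℂ) = C ((-1:ℂ)) * (X 0 ^ 1 * X 1 ^ 1 * X 2 ^ 0) + C ((4:ℂ)) * (X 0 ^ 1 * X 1 ^ 0 * X 2 ^ 1) + C ((-2:ℂ)) * (X 0 ^ 0 * X 1 ^ 0 * X 2 ^ 2) by simp only [map_neg, map_one, map_ofNat]; ring]
      exact (IsHomogeneous.add (IsHomogeneous.add (homTerm (-1:ℂ) 1 1 0 (by norm_num)) (homTerm (4:ℂ) 1 0 1 (by norm_num))) (homTerm (-2:ℂ) 0 0 2 (by norm_num)))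
    have hhomR12 : ((2 * X 0 ^ 2 - X 0 * X 2) : MvPolynomial (Fin 3) ℂ).IsHomogeneous 2 := by
      rw [show ((2 * X 0 ^ 2 - X 0 * X 2) : MvPolynomial (Fin 3) ℂ) = C ((2:ℂ)) * (X 0 ^ 2 * X 1 ^ 0 * X 2 ^ 0) + C ((-1:ℂ)) * (X 0 ^ 1 * X 1 ^ 0 * X 2 ^ 1) by simp only [map_neg, map_one, map_ofNat]; ring]
      exact (IsHomogeneous.add (homTerm (2:ℂ) 2 0 0 (by norm_num)) (homTerm (-1:ℂ) 1 0 1 (by norm_num)))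
    have hhomR20 : ((2 * X 0 ^ 3 + 4 * X 0 ^ 2 * X 1 - 3 * X 0 ^ 2 * X 2 - 10 * X 0 * X 2 ^ 2) : MvPolynomial (Fin 3) ℂ).IsHomogeneous 3 := by
      rw [show ((2 * X 0 ^ 3 + 4 * X 0 ^ 2 * X 1 - 3 * X 0 ^ 2 * X 2 - 10 * X 0 * X 2 ^ 2) : MvPolynomial (Fin 3) ℂ) = C ((2:ℂ)) * (X 0 ^ 3 * X 1 ^ 0 * X 2 ^ 0) + C ((4:ℂ)) * (X 0 ^ 2 * X 1 ^ 1 * X 2 ^ 0) + C ((-3:ℂ)) * (X 0 ^ 2 * X 1 ^ 0 * X 2 ^ 1) + C ((-10:ℂ)) * (X 0 ^ 1 * X 1 ^ 0 * X 2 ^ 2) by simp only [map_neg, map_one, map_ofNat]; ring]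
      exact (IsHomogeneous.add (IsHomogeneous.add (IsHomogeneous.add (homTerm (2:ℂ) 3 0 0 (by norm_num)) (homTerm (4:ℂ) 2 1 0 (by norm_num))) (homTerm (-3:ℂ) 2 0 1 (by norm_num))) (homTerm (-10:ℂ) 1 0 2 (by norm_num)))
    have hhomR21 : ((-10 * X 0 ^ 2 * X 1 - 8 * X 0 * X 1 ^ 2 + 11 * X 0 * X 1 * X 2 + 8 * X 0 * X 2 ^ 2 + 26 * X 1 * X 2 ^ 2 - 34 * X 2 ^ 3) : MvPolynomial (Fin 3) ℂ).IsHomogeneous 3 := by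
      rw [show ((-10 * X 0 ^ 2 * X 1 - 8 * X 0 * X 1 ^ 2 + 11 * X 0 * X 1 * X 2 + 8 * X 0 * X 2 ^ 2 + 26 * X 1 * X 2 ^ 2 - 34 * X 2 ^ 3) : MvPolynomial (Fin 3) ℂ) = C ((-10:ℂ)) * (X 0 ^ 2 * X 1 ^ 1 * X 2 ^ 0) + C ((-8:ℂ)) * (X 0 ^ 1 * X 1 ^ 2 * X 2 ^ 0) + C ((11:ℂ)) * (X 0 ^ 1 * X 1 ^ 1 * X 2 ^ 1) + C ((8:ℂ)) * (X 0 ^ 1 * X 1 ^ 0 * X 2 ^ 2) + C ((26:ℂ)) * (X 0 ^ 0 * X 1 ^ 1 * X 2 ^ 2) + C ((-34:ℂ)) * (X 0 ^ 0 * X 1 ^ 0 * X 2 ^ 3) by simp only [map_neg, map_one, map_ofNat]; ring]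
      exact (IsHomogeneous.add (IsHomogeneous.add (IsHomogeneous.add (IsHomogeneous.add (IsHomogeneous.add (homTerm (-10:ℂ) 2 1 0 (by norm_num)) (homTerm (-8:ℂ) 1 2 0 (by norm_num))) (homTerm (11:ℂ) 1 1 1 (by norm_num))) (homTerm (8:ℂ) 1 0 2 (by norm_num))) (homTerm (26:ℂ) 0 1 2 (by norm_num))) (homTerm (-34:ℂ) 0 0 3 (by norm_num)))
    have hhomR22 : ((4 * X 0 * X 1 * X 2 - 13 * X 0 * X 2 ^ 2 + 2 * X 2 ^ 3) : MvPolynomial (Fin 3) ℂ).IsHomogeneous 3 := by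
      rw [show ((4 * X 0 * X 1 * X 2 - 13 * X 0 * X 2 ^ 2 + 2 * X 2 ^ 3) : MvPolynomial (Fin 3) ℂ) = C ((4:ℂ)) * (X 0 ^ 1 * X 1 ^ 1 * X 2 ^ 1) + C ((-13:ℂ)) * (X 0 ^ 1 * X 1 ^ 0 * X 2 ^ 2) + C ((2:ℂ)) * (X 0 ^ 0 * X 1 ^ 0 * X 2 ^ 3) by simp only [map_neg, map_one, map_ofNat]; ring]
      exact (IsHomogeneous.add (IsHomogeneous.add (homTerm (4:ℂ) 1 1 1 (by norm_num)) (homTerm (-13:ℂ) 1 0 2 (by norm_num))) (homTerm (2:ℂ) 0 0 3 (by norm_num)))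
    fin_cases i
    · simpa using hhomR20
    · simpa using hhomR21
    · simpa using hhomR22
  · intro v hv
    simp only [IsSyzygy, hF0, hF1, hF2] at hv
    -- main identities
    have hA0 : ((-1494 * X 0 ^ 4 - 3132 * X 0 ^ 3 * X 1 + 3048 * X 0 ^ 3 * X 2 - 360 * X 0 ^ 2 * X 1 ^ 2 + 3252 * X 0 ^ 2 * X 1 * X 2 + 1056 * X 0 ^ 2 * X 2 ^ 2 - 40 * X 0 * X 1 ^ 3 + 300 * X 0 * X 1 ^ 2 * X 2 - 84 * X 0 * X 1 * X 2 ^ 2 - 2231 * X 0 * X 2 ^ 3 + 24 * X 2 ^ 4) * (v 1 * (4 * X 0 * X 1 * X 2 - 13 * X 0 * X 2 ^ 2 + 2 * X 2 ^ 3) - v 2 * (-10 * X 0 ^ 2 * X 1 - 8 * X 0 * X 1 ^ 2 + 11 * X 0 * X 1 * X 2 + 8 * X 0 * X 2 ^ 2 + 26 * X 1 * X 2 ^ 2 - 34 * X 2 ^ 3)) + (24 * X 0 ^ 4 + 7422 * X 0 ^ 3 * X 1 - 168 * X 0 ^ 3 * X 2 + 6792 * X 0 ^ 2 * X 1 ^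 2 - 11964 * X 0 ^ 2 * X 1 * X 2 - 5424 * X 0 ^ 2 * X 2 ^ 2 + 744 * X 0 * X 1 ^ 3 - 5634 * X 0 * X 1 ^ 2 * X 2 - 3900 * X 0 * X 1 * X 2 ^ 2 + 8076 * X 0 * X 2 ^ 3 + 56 * X 1 ^ 4 - 540 * X 1 ^ 3 * X 2 - 84 * X 1 ^ 2 * X 2 ^ 2 + 4915 * X 1 * X 2 ^ 3 + 24 * X 2 ^ 4) * (v 2 * (2 * X 0 ^ 3 + 4 * X 0 ^ 2 * X 1 - 3 * X 0 ^ 2 * X 2 - 10 * X 0 * X 2 ^ 2) - v 0 * (4 * X 0 * X 1 * X 2 - 13 * X 0 * X 2 ^ 2 + 2 * X 2 ^ 3)) + (-48 * X 0 * X 1 ^ 3 + 8 * X 1 ^ 3 * X 2 - 60 * X 1 ^ 2 * X 2 ^ 2 + 36 * X 1 * X 2 ^ 3 + 403 * X 2 ^ 4) * (v 0 * (-10 * X 0 ^ 2 * X 1 - 8 * X 0 * X 1 ^ 2 + 11 * X 0 * X 1 * X 2 + 8 * X 0 * X 2 ^ 2 + 26 * X 1 * X 2 ^ 2 - 34 *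 X 2 ^ 3) - v 1 * (2 * X 0 ^ 3 + 4 * X 0 ^ 2 * X 1 - 3 * X 0 ^ 2 * X 2 - 10 * X 0 * X 2 ^ 2))) * (5 * X 0 ^ 4 * X 1 + 4 * X 0 ^ 3 * X 1 ^ 2 - 8 * X 0 ^ 3 * X 1 * X 2 - 4 * X 0 ^ 3 * X 2 ^ 2 - 3 * X 0 ^ 2 * X 1 ^ 2 * X 2 - 3 * X 0 ^ 2 * X 1 * X 2 ^ 2 + 6 * X 0 ^ 2 * X 2 ^ 3 + 4 * X 0 * X 1 * X 2 ^ 3 - X 2 ^ 5) = (X 0 - X 2) ^ 9 * (24 * (v 1 * (4 * X 0 * X 1 * X 2 - 13 * X 0 * X 2 ^ 2 + 2 * X 2 ^ 3) - v 2 * (-10 * X 0 ^ 2 * X 1 - 8 * X 0 * X 1 ^ 2 + 11 * X 0 * X 1 * X 2 + 8 * X 0 * X 2 ^ 2 + 26 * X 1 * X 2 ^ 2 - 34 * X 2 ^ 3))) := by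
      linear_combination ((-96 * X 0 ^ 5 * X 1 * X 2 + 312 * X 0 ^ 5 * X 2 ^ 2 - 29688 * X 0 ^ 4 * X 1 ^ 2 * X 2 + 97158 * X 0 ^ 4 * X 1 * X 2 ^ 2 - 2232 * X 0 ^ 4 * X 2 ^ 3 + 480 * X 0 ^ 3 * X 1 ^ 4 - 27168 * X 0 ^ 3 * X 1 ^ 3 * X 2 + 136152 * X 0 ^ 3 * X 1 ^ 2 * X 2 ^ 2 - 148680 * X 0 ^ 3 * X 1 * X 2 ^ 3 - 70176 * X 0 ^ 3 * X 2 ^ 4 + 384 * X 0 ^ 2 * X 1 ^ 5 - 3584 * X 0 ^ 2 * X 1 ^ 4 * X 2 + 32424 * X 0 ^ 2 * X 1 ^ 3 * X 2 ^ 2 - 71586 * X 0 ^ 2 * X 1 ^ 2 * X 2 ^ 3 - 63106 * X 0 ^ 2 * X 1 * X 2 ^ 4 + 115836 * X 0 ^ 2 * X 2 ^ 5 - 288 * X 0 * X 1 ^ 5 * X 2 + 2208 * X 0 * X 1 ^ 4 * X 2 ^ 2 - 7424 * X 0 * X 1 ^ 3 * X 2 ^ 3 - 12792 * X 0 * X 1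 ^ 2 * X 2 ^ 4 + 76320 * X 0 * X 1 * X 2 ^ 5 - 12616 * X 0 * X 2 ^ 6 + 96 * X 1 ^ 4 * X 2 ^ 3 - 752 * X 1 ^ 3 * X 2 ^ 4 + 3144 * X 1 ^ 2 * X 2 ^ 5 - 576 * X 1 * X 2 ^ 6 - 13750 * X 2 ^ 7)) * hv
    have hA1 : ((-1494 * X 0 ^ 4 - 3132 * X 0 ^ 3 * X 1 + 3048 * X 0 ^ 3 * X 2 - 360 * X 0 ^ 2 * X 1 ^ 2 + 3252 * X 0 ^ 2 * X 1 * X 2 + 1056 * X 0 ^ 2 * X 2 ^ 2 - 40 * X 0 * X 1 ^ 3 + 300 * X 0 * X 1 ^ 2 * X 2 - 84 * X 0 * X 1 * X 2 ^ 2 - 2231 * X 0 * X 2 ^ 3 + 24 * X 2 ^ 4) * (v 1 * (4 * X 0 * X 1 * X 2 - 13 * X 0 * X 2 ^ 2 + 2 * X 2 ^ 3) - v 2 * (-10 * X 0 ^ 2 * X 1 - 8 * X 0 * X 1 ^ 2 + 11 * X 0 * X 1 * X 2 + 8 * X 0 * X 2 ^ 2 + 26 * X 1 * X 2 ^ 2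 - 34 * X 2 ^ 3)) + (24 * X 0 ^ 4 + 7422 * X 0 ^ 3 * X 1 - 168 * X 0 ^ 3 * X 2 + 6792 * X 0 ^ 2 * X 1 ^ 2 - 11964 * X 0 ^ 2 * X 1 * X 2 - 5424 * X 0 ^ 2 * X 2 ^ 2 + 744 * X 0 * X 1 ^ 3 - 5634 * X 0 * X 1 ^ 2 * X 2 - 3900 * X 0 * X 1 * X 2 ^ 2 + 8076 * X 0 * X 2 ^ 3 + 56 * X 1 ^ 4 - 540 * X 1 ^ 3 * X 2 - 84 * X 1 ^ 2 * X 2 ^ 2 + 4915 * X 1 * X 2 ^ 3 + 24 * X 2 ^ 4) * (v 2 * (2 * X 0 ^ 3 + 4 * X 0 ^ 2 * X 1 - 3 * X 0 ^ 2 * X 2 - 10 * X 0 * X 2 ^ 2) - v 0 * (4 * X 0 * X 1 * X 2 - 13 * X 0 * X 2 ^ 2 + 2 * X 2 ^ 3)) + (-48 * X 0 * X 1 ^ 3 + 8 * X 1 ^ 3 * X 2 - 60 * X 1 ^ 2 * X 2 ^ 2 + 36 * X 1 * X 2 ^ 3 + 403 * X 2 ^ 4) * (v 0 * (-10 * X 0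 ^ 2 * X 1 - 8 * X 0 * X 1 ^ 2 + 11 * X 0 * X 1 * X 2 + 8 * X 0 * X 2 ^ 2 + 26 * X 1 * X 2 ^ 2 - 34 * X 2 ^ 3) - v 1 * (2 * X 0 ^ 3 + 4 * X 0 ^ 2 * X 1 - 3 * X 0 ^ 2 * X 2 - 10 * X 0 * X 2 ^ 2))) * (X 0 ^ 5 + 2 * X 0 ^ 4 * X 1 - 2 * X 0 ^ 4 * X 2 - 2 * X 0 ^ 3 * X 1 * X 2 - X 0 ^ 3 * X 2 ^ 2 + 2 * X 0 ^ 2 * X 2 ^ 3) = (X 0 - X 2) ^ 9 * (24 * (v 2 * (2 * X 0 ^ 3 + 4 * X 0 ^ 2 * X 1 - 3 * X 0 ^ 2 * X 2 - 10 * X 0 * X 2 ^ 2) - v 0 * (4 * X 0 * X 1 * X 2 - 13 * X 0 * X 2 ^ 2 + 2 * X 2 ^ 3))) := by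
      linear_combination ((-5976 * X 0 ^ 5 * X 1 * X 2 + 19422 * X 0 ^ 5 * X 2 ^ 2 + 96 * X 0 ^ 4 * X 1 ^ 3 - 12528 * X 0 ^ 4 * X 1 ^ 2 * X 2 + 52908 * X 0 ^ 4 * X 1 * X 2 ^ 2 - 42612 * X 0 ^ 4 * X 2 ^ 3 + 192 * X 0 ^ 3 * X 1 ^ 4 - 1600 * X 0 ^ 3 * X 1 ^ 3 * X 2 + 17808 * X 0 ^ 3 * X 1 ^ 2 * X 2 ^ 2 - 44388 * X 0 ^ 3 * X 1 * X 2 ^ 3 - 8438 * X 0 ^ 3 * X 2 ^ 4 - 192 * X 0 ^ 2 * X 1 ^ 4 * X 2 + 1504 * X 0 ^ 2 * X 1 ^ 3 * X 2 ^ 2 - 5280 * X 0 ^ 2 * X 1 ^ 2 * X 2 ^ 3 - 2832 * X 0 ^ 2 * X 1 * X 2 ^ 4 + 32324 * X 0 ^ 2 * X 2 ^ 5 + 288 * X 0 * X 1 * X 2 ^ 5 - 744 * X 0 * X 2 ^ 6 + 48 * X 2 ^ 7)) * hv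
    have hB0 : ((-1494 * X 0 ^ 4 - 3132 * X 0 ^ 3 * X 1 + 3048 * X 0 ^ 3 * X 2 - 360 * X 0 ^ 2 * X 1 ^ 2 + 3252 * X 0 ^ 2 * X 1 * X 2 + 1056 * X 0 ^ 2 * X 2 ^ 2 - 40 * X 0 * X 1 ^ 3 + 300 * X 0 * X 1 ^ 2 * X 2 - 84 * X 0 * X 1 * X 2 ^ 2 - 2231 * X 0 * X 2 ^ 3 + 24 * X 2 ^ 4) * ((-X 0 * X 1 + 4 * X 0 * X 2 - 2 * X 2 ^ 2) * v 2 - (2 * X 0 ^ 2 - X 0 * X 2) * v 1) + (24 * X 0 ^ 4 + 7422 * X 0 ^ 3 * X 1 - 168 * X 0 ^ 3 * X 2 + 6792 * X 0 ^ 2 * X 1 ^ 2 - 11964 * X 0 ^ 2 * X 1 * X 2 - 5424 * X 0 ^ 2 * X 2 ^ 2 + 744 * X 0 * X 1 ^ 3 - 5634 * X 0 * X 1 ^ 2 * X 2 - 3900 * X 0 * X 1 * X 2 ^ 2 + 8076 * X 0 * X 2 ^ 3 + 56 * X 1 ^ 4 - 540 * X 1 ^ 3 * X 2 - 84 * X 1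 ^ 2 * X 2 ^ 2 + 4915 * X 1 * X 2 ^ 3 + 24 * X 2 ^ 4) * ((2 * X 0 ^ 2 - X 0 * X 2) * v 0 - (X 0 ^ 2) * v 2) + (-48 * X 0 * X 1 ^ 3 + 8 * X 1 ^ 3 * X 2 - 60 * X 1 ^ 2 * X 2 ^ 2 + 36 * X 1 * X 2 ^ 3 + 403 * X 2 ^ 4) * ((X 0 ^ 2) * v 1 - (-X 0 * X 1 + 4 * X 0 * X 2 - 2 * X 2 ^ 2) * v 0)) * (5 * X 0 ^ 4 * X 1 + 4 * X 0 ^ 3 * X 1 ^ 2 - 8 * X 0 ^ 3 * X 1 * X 2 - 4 * X 0 ^ 3 * X 2 ^ 2 - 3 * X 0 ^ 2 * X 1 ^ 2 * X 2 - 3 * X 0 ^ 2 * X 1 * X 2 ^ 2 + 6 * X 0 ^ 2 * X 2 ^ 3 + 4 * X 0 * X 1 * X 2 ^ 3 - X 2 ^ 5) = (X 0 - X 2) ^ 9 * (24 * ((-X 0 * X 1 + 4 * X 0 * X 2 - 2 * X 2 ^ 2) * v 2 - (2 * X 0 ^ 2 - X 0 * X 2) * v 1)) := by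
      linear_combination ((48 * X 0 ^ 6 + 14844 * X 0 ^ 5 * X 1 - 360 * X 0 ^ 5 * X 2 + 13584 * X 0 ^ 4 * X 1 ^ 2 - 31350 * X 0 ^ 4 * X 1 * X 2 - 10680 * X 0 ^ 4 * X 2 ^ 2 + 1488 * X 0 ^ 3 * X 1 ^ 3 - 18060 * X 0 ^ 3 * X 1 ^ 2 * X 2 + 4164 * X 0 ^ 3 * X 1 * X 2 ^ 2 + 21576 * X 0 ^ 3 * X 2 ^ 3 + 64 * X 0 ^ 2 * X 1 ^ 4 - 1632 * X 0 ^ 2 * X 1 ^ 3 * X 2 + 5466 * X 0 ^ 2 * X 1 ^ 2 * X 2 ^ 2 + 13730 * X 0 ^ 2 * X 1 * X 2 ^ 3 - 8028 * X 0 ^ 2 * X 2 ^ 4 - 48 * X 0 * X 1 ^ 4 * X 2 + 352 * X 0 * X 1 ^ 3 * X 2 ^ 2 + 360 * X 0 * X 1 ^ 2 * X 2 ^ 3 - 4656 * X 0 * X 1 * X 2 ^ 4 - 1636 * X 0 * X 2 ^ 5 + 16 * X 1 ^ 3 * X 2 ^ 3 - 120 * X 1 ^ 2 * X 2 ^ 4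 + 72 * X 1 * X 2 ^ 5 + 806 * X 2 ^ 6)) * hv
    have hB1 : ((-1494 * X 0 ^ 4 - 3132 * X 0 ^ 3 * X 1 + 3048 * X 0 ^ 3 * X 2 - 360 * X 0 ^ 2 * X 1 ^ 2 + 3252 * X 0 ^ 2 * X 1 * X 2 + 1056 * X 0 ^ 2 * X 2 ^ 2 - 40 * X 0 * X 1 ^ 3 + 300 * X 0 * X 1 ^ 2 * X 2 - 84 * X 0 * X 1 * X 2 ^ 2 - 2231 * X 0 * X 2 ^ 3 + 24 * X 2 ^ 4) * ((-X 0 * X 1 + 4 * X 0 * X 2 - 2 * X 2 ^ 2) * v 2 - (2 * X 0 ^ 2 - X 0 * X 2) * v 1) + (24 * X 0 ^ 4 + 7422 * X 0 ^ 3 * X 1 - 168 * X 0 ^ 3 * X 2 + 6792 * X 0 ^ 2 * X 1 ^ 2 - 11964 * X 0 ^ 2 * X 1 * X 2 - 5424 * X 0 ^ 2 * X 2 ^ 2 + 744 * X 0 * X 1 ^ 3 - 5634 * X 0 * X 1 ^ 2 * X 2 - 3900 * X 0 * X 1 * X 2 ^ 2 + 8076 * X 0 * X 2 ^ 3 + 56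 * X 1 ^ 4 - 540 * X 1 ^ 3 * X 2 - 84 * X 1 ^ 2 * X 2 ^ 2 + 4915 * X 1 * X 2 ^ 3 + 24 * X 2 ^ 4) * ((2 * X 0 ^ 2 - X 0 * X 2) * v 0 - (X 0 ^ 2) * v 2) + (-48 * X 0 * X 1 ^ 3 + 8 * X 1 ^ 3 * X 2 - 60 * X 1 ^ 2 * X 2 ^ 2 + 36 * X 1 * X 2 ^ 3 + 403 * X 2 ^ 4) * ((X 0 ^ 2) * v 1 - (-X 0 * X 1 + 4 * X 0 * X 2 - 2 * X 2 ^ 2) * v 0)) * (X 0 ^ 5 + 2 * X 0 ^ 4 * X 1 - 2 * X 0 ^ 4 * X 2 - 2 * X 0 ^ 3 * X 1 * X 2 - X 0 ^ 3 * X 2 ^ 2 + 2 * X 0 ^ 2 * X 2 ^ 3) = (X 0 - X 2) ^ 9 * (24 * ((2 * X 0 ^ 2 - X 0 * X 2) * v 0 - (X 0 ^ 2) * v 2)) := by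
      linear_combination ((2988 * X 0 ^ 6 + 6264 * X 0 ^ 5 * X 1 - 7590 * X 0 ^ 5 * X 2 + 720 * X 0 ^ 4 * X 1 ^ 2 - 9636 * X 0 ^ 4 * X 1 * X 2 + 936 * X 0 ^ 4 * X 2 ^ 2 + 32 * X 0 ^ 3 * X 1 ^ 3 - 960 * X 0 ^ 3 * X 1 ^ 2 * X 2 + 3420 * X 0 ^ 3 * X 1 * X 2 ^ 2 + 5518 * X 0 ^ 3 * X 2 ^ 3 - 32 * X 0 ^ 2 * X 1 ^ 3 * X 2 + 240 * X 0 ^ 2 * X 1 ^ 2 * X 2 ^ 2 - 48 * X 0 ^ 2 * X 1 * X 2 ^ 3 - 1876 * X 0 ^ 2 * X 2 ^ 4 + 24 * X 0 * X 2 ^ 5)) * hv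
    obtain ⟨a, ha⟩ := primeL.pow_dvd_of_dvd_mul_right 9 hnd ⟨_, hA0⟩
    obtain ⟨b, hb⟩ := primeL.pow_dvd_of_dvd_mul_right 9 hnd ⟨_, hB0⟩
    have hL9 : ((X 0 - X 2 : P3)) ^ 9 ≠ 0 := pow_ne_zero _ hLne
    have ha0 : a * (5 * X 0 ^ 4 * X 1 + 4 * X 0 ^ 3 * X 1 ^ 2 - 8 * X 0 ^ 3 * X 1 * X 2 - 4 * X 0 ^ 3 * X 2 ^ 2 - 3 * X 0 ^ 2 * X 1 ^ 2 * X 2 - 3 * X 0 ^ 2 * X 1 * X 2 ^ 2 + 6 * X 0 ^ 2 * X 2 ^ 3 + 4 * X 0 * X 1 * X 2 ^ 3 - X 2 ^ 5) = 24 * (v 1 * (4 * X 0 * X 1 * X 2 - 13 * X 0 * X 2 ^ 2 + 2 * X 2 ^ 3) - v 2 * (-10 * X 0 ^ 2 * X 1 - 8 * X 0 * X 1 ^ 2 + 11 * X 0 * X 1 * X 2 + 8 * X 0 * X 2 ^ 2 + 26 * X 1 * X 2 ^ 2 - 34 * X 2 ^ 3)) := by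
      apply mul_left_cancel₀ hL9
      linear_combination hA0 - ((5 * X 0 ^ 4 * X 1 + 4 * X 0 ^ 3 * X 1 ^ 2 - 8 * X 0 ^ 3 * X 1 * X 2 - 4 * X 0 ^ 3 * X 2 ^ 2 - 3 * X 0 ^ 2 * X 1 ^ 2 * X 2 - 3 * X 0 ^ 2 * X 1 * X 2 ^ 2 + 6 * X 0 ^ 2 * X 2 ^ 3 + 4 * X 0 * X 1 * X 2 ^ 3 - X 2 ^ 5)) * ha
    have ha1 : a * (X 0 ^ 5 + 2 * X 0 ^ 4 * X 1 - 2 * X 0 ^ 4 * X 2 - 2 * X 0 ^ 3 * X 1 * X 2 - X 0 ^ 3 * X 2 ^ 2 + 2 * X 0 ^ 2 * X 2 ^ 3) = 24 * (v 2 * (2 * X 0 ^ 3 + 4 * X 0 ^ 2 * X 1 - 3 * X 0 ^ 2 * X 2 - 10 * X 0 * X 2 ^ 2) - v 0 * (4 * X 0 * X 1 * X 2 - 13 * X 0 * X 2 ^ 2 + 2 * X 2 ^ 3)) := by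
      apply mul_left_cancel₀ hL9
      linear_combination hA1 - ((X 0 ^ 5 + 2 * X 0 ^ 4 * X 1 - 2 * X 0 ^ 4 * X 2 - 2 * X 0 ^ 3 * X 1 * X 2 - X 0 ^ 3 * X 2 ^ 2 + 2 * X 0 ^ 2 * X 2 ^ 3)) * ha
    have hb0 : b * (5 * X 0 ^ 4 * X 1 + 4 * X 0 ^ 3 * X 1 ^ 2 - 8 * X 0 ^ 3 * X 1 * X 2 - 4 * X 0 ^ 3 * X 2 ^ 2 - 3 * X 0 ^ 2 * X 1 ^ 2 * X 2 - 3 * X 0 ^ 2 * X 1 * X 2 ^ 2 + 6 * X 0 ^ 2 * X 2 ^ 3 + 4 * X 0 * X 1 * X 2 ^ 3 - X 2 ^ 5) = 24 * ((-X 0 * X 1 + 4 * X 0 * X 2 - 2 * X 2 ^ 2) * v 2 - (2 * X 0 ^ 2 - X 0 * X 2) * v 1) := by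
      apply mul_left_cancel₀ hL9
      linear_combination hB0 - ((5 * X 0 ^ 4 * X 1 + 4 * X 0 ^ 3 * X 1 ^ 2 - 8 * X 0 ^ 3 * X 1 * X 2 - 4 * X 0 ^ 3 * X 2 ^ 2 - 3 * X 0 ^ 2 * X 1 ^ 2 * X 2 - 3 * X 0 ^ 2 * X 1 * X 2 ^ 2 + 6 * X 0 ^ 2 * X 2 ^ 3 + 4 * X 0 * X 1 * X 2 ^ 3 - X 2 ^ 5)) * hb
    have hb1 : b * (X 0 ^ 5 + 2 * X 0 ^ 4 * X 1 - 2 * X 0 ^ 4 * X 2 - 2 * X 0 ^ 3 * X 1 * X 2 - X 0 ^ 3 * X 2 ^ 2 + 2 * X 0 ^ 2 * X 2 ^ 3) = 24 * ((2 * X 0 ^ 2 - X 0 * X 2) * v 0 - (X 0 ^ 2) * v 2) := by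
      apply mul_left_cancel₀ hL9
      linear_combination hB1 - ((X 0 ^ 5 + 2 * X 0 ^ 4 * X 1 - 2 * X 0 ^ 4 * X 2 - 2 * X 0 ^ 3 * X 1 * X 2 - X 0 ^ 3 * X 2 ^ 2 + 2 * X 0 ^ 2 * X 2 ^ 3)) * hb
    -- component equations
    have hcomp0 : ((X 0 ^ 5 + 2 * X 0 ^ 4 * X 1 - 2 * X 0 ^ 4 * X 2 - 2 * X 0 ^ 3 * X 1 * X 2 - X 0 ^ 3 * X 2 ^ 2 + 2 * X 0 ^ 2 * X 2 ^ 3) : P3) * (96 * v 0 - a * (X 0 ^ 2) - b * (2 * X 0 ^ 3 + 4 * X 0 ^ 2 * X 1 - 3 * X 0 ^ 2 * X 2 - 10 * X 0 * X 2 ^ 2)) = 0 := by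
      linear_combination (-((X 0 ^ 2))) * ha1 - ((2 * X 0 ^ 3 + 4 * X 0 ^ 2 * X 1 - 3 * X 0 ^ 2 * X 2 - 10 * X 0 * X 2 ^ 2)) * hb1
    have hcomp1 : ((5 * X 0 ^ 4 * X 1 + 4 * X 0 ^ 3 * X 1 ^ 2 - 8 * X 0 ^ 3 * X 1 * X 2 - 4 * X 0 ^ 3 * X 2 ^ 2 - 3 * X 0 ^ 2 * X 1 ^ 2 * X 2 - 3 * X 0 ^ 2 * X 1 * X 2 ^ 2 + 6 * X 0 ^ 2 * X 2 ^ 3 + 4 * X 0 * X 1 * X 2 ^ 3 - X 2 ^ 5) : P3) * (96 * v 1 - a * (-X 0 * X 1 + 4 * X 0 * X 2 - 2 * X 2 ^ 2) - b * (-10 * X 0 ^ 2 * X 1 - 8 * X 0 * X 1 ^ 2 + 11 * X 0 * X 1 * X 2 + 8 * X 0 * X 2 ^ 2 + 26 * X 1 * X 2 ^ 2 - 34 * X 2 ^ 3)) = 0 := by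
      linear_combination (-((-X 0 * X 1 + 4 * X 0 * X 2 - 2 * X 2 ^ 2))) * ha0 - ((-10 * X 0 ^ 2 * X 1 - 8 * X 0 * X 1 ^ 2 + 11 * X 0 * X 1 * X 2 + 8 * X 0 * X 2 ^ 2 + 26 * X 1 * X 2 ^ 2 - 34 * X 2 ^ 3)) * hb0
    have hcomp2 : ((X 0 ^ 5 + 2 * X 0 ^ 4 * X 1 - 2 * X 0 ^ 4 * X 2 - 2 * X 0 ^ 3 * X 1 * X 2 - X 0 ^ 3 * X 2 ^ 2 + 2 * X 0 ^ 2 * X 2 ^ 3) : P3) * (96 * v 2 - a * (2 * X 0 ^ 2 - X 0 * X 2) - b * (4 * X 0 * X 1 * X 2 - 13 * X 0 * X 2 ^ 2 + 2 * X 2 ^ 3)) = 0 := by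
      linear_combination (-((2 * X 0 ^ 2 - X 0 * X 2))) * ha1 - ((4 * X 0 * X 1 * X 2 - 13 * X 0 * X 2 ^ 2 + 2 * X 2 ^ 3)) * hb1
    have hw0 : (96 : P3) * v 0 - a * (X 0 ^ 2) - b * (2 * X 0 ^ 3 + 4 * X 0 ^ 2 * X 1 - 3 * X 0 ^ 2 * X 2 - 10 * X 0 * X 2 ^ 2) = 0 :=
      (mul_eq_zero.mp hcomp0).resolve_left hF1ne
    have hw1 : (96 : P3) * v 1 - a * (-X 0 * X 1 + 4 * X 0 * X 2 - 2 * X 2 ^ 2) - b * (-10 * X 0 ^ 2 * X 1 - 8 * X 0 * X 1 ^ 2 + 11 * X 0 * X 1 * X 2 + 8 * X 0 * X 2 ^ 2 + 26 * X 1 * X 2 ^ 2 - 34 * X 2 ^ 3) = 0 :=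
      (mul_eq_zero.mp hcomp1).resolve_left hF0ne
    have hw2 : (96 : P3) * v 2 - a * (2 * X 0 ^ 2 - X 0 * X 2) - b * (4 * X 0 * X 1 * X 2 - 13 * X 0 * X 2 ^ 2 + 2 * X 2 ^ 3) = 0 :=
      (mul_eq_zero.mp hcomp2).resolve_left hF1ne
    have hc96 : (96 : P3) * C ((96 : ℂ)⁻¹) = 1 := by
      rw [← map_ofNat (C : ℂ →+* P3) 96, ← C_mul]
      norm_num
    refine ⟨(C ((96 : ℂ)⁻¹) * a, C ((96 : ℂ)⁻¹) * b), ?_, ?_⟩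
    · funext i
      fin_cases i <;>
        simp only [Fin.zero_eta, Fin.mk_one, Fin.reduceFinMk, Pi.add_apply, Pi.smul_apply,
          Matrix.cons_val_zero, Matrix.cons_val_one, Matrix.head_cons, Matrix.cons_val_two,
          Matrix.tail_cons, smul_eq_mul]
      · linear_combination C ((96 : ℂ)⁻¹) * hw0 - v 0 * hc96
      · linear_combination C ((96 : ℂ)⁻¹) * hw1 - v 1 * hc96
      · linear_combination C ((96 : ℂ)⁻¹) * hw2 - v 2 * hc96
    · rintro ⟨y1, y2⟩ hy
      have hdec : v = (C ((96 : ℂ)⁻¹) * a) • ![(X 0 ^ 2), (-X 0 * X 1 + 4 * X 0 * X 2 - 2 * X 2 ^ 2), (2 * X 0 ^ 2 - X 0 * X 2)]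
          + (C ((96 : ℂ)⁻¹) * b) • ![(2 * X 0 ^ 3 + 4 * X 0 ^ 2 * X 1 - 3 * X 0 ^ 2 * X 2 - 10 * X 0 * X 2 ^ 2), (-10 * X 0 ^ 2 * X 1 - 8 * X 0 * X 1 ^ 2 + 11 * X 0 * X 1 * X 2 + 8 * X 0 * X 2 ^ 2 + 26 * X 1 * X 2 ^ 2 - 34 * X 2 ^ 3), (4 * X 0 * X 1 * X 2 - 13 * X 0 * X 2 ^ 2 + 2 * X 2 ^ 3)] := by
        funext i
        fin_cases i <;>
          simp only [Fin.zero_eta, Fin.mk_one, Fin.reduceFinMk, Pi.add_apply, Pi.smul_apply,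
            Matrix.cons_val_zero, Matrix.cons_val_one, Matrix.head_cons, Matrix.cons_val_two,
            Matrix.tail_cons, smul_eq_mul]
        · linear_combination C ((96 : ℂ)⁻¹) * hw0 - v 0 * hc96
        · linear_combination C ((96 : ℂ)⁻¹) * hw1 - v 1 * hc96
        · linear_combination C ((96 : ℂ)⁻¹) * hw2 - v 2 * hc96
      have heq := hy.symm.trans hdec
      have h1 := congrFun heq 1
      have h2 := congrFun heq 2
      simp only [Pi.add_apply, Pi.smul_apply, Matrix.cons_val_one, Matrix.head_cons,
        Matrix.cons_val_two, Matrix.tail_cons, smul_eq_mul, Matrix.cons_val_zero] at h1 h2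
      have hy1 : (y1 - C ((96 : ℂ)⁻¹) * a) * (4 * (5 * X 0 ^ 4 * X 1 + 4 * X 0 ^ 3 * X 1 ^ 2 - 8 * X 0 ^ 3 * X 1 * X 2 - 4 * X 0 ^ 3 * X 2 ^ 2 - 3 * X 0 ^ 2 * X 1 ^ 2 * X 2 - 3 * X 0 ^ 2 * X 1 * X 2 ^ 2 + 6 * X 0 ^ 2 * X 2 ^ 3 + 4 * X 0 * X 1 * X 2 ^ 3 - X 2 ^ 5)) = 0 := by
        linear_combination ((4 * X 0 * X 1 * X 2 - 13 * X 0 * X 2 ^ 2 + 2 * X 2 ^ 3)) * h1 - ((-10 * X 0 ^ 2 * X 1 - 8 * X 0 * X 1 ^ 2 + 11 * X 0 * X 1 * X 2 + 8 * X 0 * X 2 ^ 2 + 26 * X 1 * X 2 ^ 2 - 34 * X 2 ^ 3)) * h2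
      have hy2 : (y2 - C ((96 : ℂ)⁻¹) * b) * (4 * (5 * X 0 ^ 4 * X 1 + 4 * X 0 ^ 3 * X 1 ^ 2 - 8 * X 0 ^ 3 * X 1 * X 2 - 4 * X 0 ^ 3 * X 2 ^ 2 - 3 * X 0 ^ 2 * X 1 ^ 2 * X 2 - 3 * X 0 ^ 2 * X 1 * X 2 ^ 2 + 6 * X 0 ^ 2 * X 2 ^ 3 + 4 * X 0 * X 1 * X 2 ^ 3 - X 2 ^ 5)) = 0 := by
        linear_combination (-((2 * X 0 ^ 2 - X 0 * X 2))) * h1 + ((-X 0 * X 1 + 4 * X 0 * X 2 - 2 * X 2 ^ 2)) * h2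
      have h4ne : ((4 : P3) * (5 * X 0 ^ 4 * X 1 + 4 * X 0 ^ 3 * X 1 ^ 2 - 8 * X 0 ^ 3 * X 1 * X 2 - 4 * X 0 ^ 3 * X 2 ^ 2 - 3 * X 0 ^ 2 * X 1 ^ 2 * X 2 - 3 * X 0 ^ 2 * X 1 * X 2 ^ 2 + 6 * X 0 ^ 2 * X 2 ^ 3 + 4 * X 0 * X 1 * X 2 ^ 3 - X 2 ^ 5)) ≠ 0 := by
        intro h
        have := congrArg (eval (![1, 0, 1] : Fin 3 → ℂ)) h
        simp at this
        all_goals norm_num at this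
      have e1 : y1 = C ((96 : ℂ)⁻¹) * a :=
        sub_eq_zero.mp ((mul_eq_zero.mp hy1).resolve_right h4ne)
      have e2 : y2 = C ((96 : ℂ)⁻¹) * b :=
        sub_eq_zero.mp ((mul_eq_zero.mp hy2).resolve_right h4ne)
      exact Prod.ext_iff.mpr ⟨e1, e2⟩
end

section
/- Let G be the subgroup of GL₃(ℂ) generated by the diagonal matrix n = diag(1, ω, ω²) and the six 3×3 permutation matrices (so G is a semidirect product N ⋊ S₃ with N = ⟨n⟩ cyclic of order 3). Then for every λ ∈ ℂ, G acts transitively on the nine points p₁(λ), …, p₉(λ) up to scalar: for all j, k ∈ {1, …, 9} there exist g ∈ G and a nonzero scalar c ∈ ℂ with g · p_j(λ) = c · p_k(λ) in ℂ³. -/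
/-- Representative vectors in `ℂ³` of the nine points `p_k(λ)` of `𝒫₉(λ)`;
the index `k : Fin 9` corresponds to `p_{k+1}(λ)` of the paper. -/
noncomputable def hessePoint (ω lam : ℂ) : Fin 9 → Fin 3 → ℂ :=
  ![![lam, 1, 1], ![1, lam, 1], ![1, 1, lam],
    ![lam, ω, ω ^ 2], ![ω ^ 2, lam, ω], ![ω, ω ^ 2, lam],
    ![lam, ω ^ 2, ω], ![ω, lam, ω ^ 2], ![ω ^ 2, ω, lam]]

/-- The subgroup `G = N ⋊ S₃` of `GL₃(ℂ)` generated by the diagonal matrix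
`n = diag(1, ω, ω²)` and the six `3 × 3` permutation matrices. -/
def hesseGroup (ω : ℂ) : Subgroup (GL (Fin 3) ℂ) :=
  Subgroup.closure
    {g : GL (Fin 3) ℂ |
      (g : Matrix (Fin 3) (Fin 3) ℂ) = Matrix.diagonal ![1, ω, ω ^ 2] ∨
      ∃ σ : Equiv.Perm (Fin 3), (g : Matrix (Fin 3) (Fin 3) ℂ) = σ.permMatrix ℂ}

/-- The auxiliary "related up to scalar via an element of `G`" relation. -/
def hesseRel (ω lam : ℂ) (j k : Fin 9) : Prop :=
  ∃ g ∈ hesseGroup ω, ∃ c : ℂ, c ≠ 0 ∧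
    (g : Matrix (Fin 3) (Fin 3) ℂ).mulVec (hessePoint ω lam j) =
      c • hessePoint ω lam k

lemma hesseRel_symm {ω lam : ℂ} {j k : Fin 9} (h : hesseRel ω lam j k) :
    hesseRel ω lam k j := by
  obtain ⟨g, hg, c, hc, hgc⟩ := h
  refine ⟨g⁻¹, inv_mem hg, c⁻¹, inv_ne_zero hc, ?_⟩
  have h1 : ((g⁻¹ : GL (Fin 3) ℂ) : Matrix (Fin 3) (Fin 3) ℂ).mulVec
      ((g : Matrix (Fin 3) (Fin 3) ℂ).mulVec (hessePoint ω lam j)) =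
      hessePoint ω lam j := by
    rw [Matrix.mulVec_mulVec]
    have : ((g⁻¹ : GL (Fin 3) ℂ) : Matrix (Fin 3) (Fin 3) ℂ) *
        (g : Matrix (Fin 3) (Fin 3) ℂ) = 1 := g.inv_mul
    rw [this, Matrix.one_mulVec]
  rw [hgc, Matrix.mulVec_smul] at h1
  rw [← h1, smul_smul, inv_mul_cancel₀ hc, one_smul]

lemma hesseRel_trans {ω lam : ℂ} {i j k : Fin 9} (h1 : hesseRel ω lam i j)
    (h2 : hesseRel ω lam j k) : hesseRel ω lam i k := by
  obtain ⟨g, hg, c, hc, hgc⟩ := h1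
  obtain ⟨g', hg', c', hc', hgc'⟩ := h2
  refine ⟨g' * g, mul_mem hg' hg, c' * c, mul_ne_zero hc' hc, ?_⟩
  have hcoe : ((g' * g : GL (Fin 3) ℂ) : Matrix (Fin 3) (Fin 3) ℂ) =
      (g' : Matrix (Fin 3) (Fin 3) ℂ) * (g : Matrix (Fin 3) (Fin 3) ℂ) := by simp
  rw [hcoe, ← Matrix.mulVec_mulVec, hgc, Matrix.mulVec_smul, hgc', smul_smul,
    mul_comm c c']

/-- For every `λ ∈ ℂ`, the group `G = ⟨diag(1,ω,ω²)⟩ ⋊ S₃ ≤ GL₃(ℂ)`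
acts transitively on the nine points `p₁(λ), …, p₉(λ)` up to scalar: for all `j, k`
there are `g ∈ G` and a nonzero scalar `c ∈ ℂ` with `g · p_j(λ) = c · p_k(λ)` in `ℂ³`. -/
theorem stmt_19 (ω : ℂ) (hω : ω ^ 2 + ω + 1 = 0) (lam : ℂ) (j k : Fin 9) :
    ∃ g ∈ hesseGroup ω, ∃ c : ℂ, c ≠ 0 ∧
      (g : Matrix (Fin 3) (Fin 3) ℂ).mulVec (hessePoint ω lam j) =
        c • hessePoint ω lam k := by
  have hω3 : ω ^ 3 = 1 := by linear_combination (ω - 1) * hω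
  have hω0 : ω ≠ 0 := by intro h; rw [h] at hω; norm_num at hω
  have hω20 : ω ^ 2 ≠ 0 := pow_ne_zero 2 hω0
  -- the diagonal generator n = diag(1, ω, ω²) as a unit
  set nM : Matrix (Fin 3) (Fin 3) ℂ := Matrix.diagonal ![1, ω, ω ^ 2] with hnM
  set nI : Matrix (Fin 3) (Fin 3) ℂ := Matrix.diagonal ![1, ω ^ 2, ω] with hnI
  have hmul1 : nM * nI = 1 := by
    ext i m
    fin_cases i <;> fin_cases m <;>
      simp [hnM, hnI, Matrix.mul_apply, Matrix.diagonal, Fin.sum_univ_three,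
        Matrix.one_apply] <;> linear_combination hω3
  have hmul2 : nI * nM = 1 := by
    ext i m
    fin_cases i <;> fin_cases m <;>
      simp [hnM, hnI, Matrix.mul_apply, Matrix.diagonal, Fin.sum_univ_three,
        Matrix.one_apply] <;> linear_combination hω3
  set nU : GL (Fin 3) ℂ := ⟨nM, nI, hmul1, hmul2⟩ with hnU
  have hnUmem : nU ∈ hesseGroup ω := Subgroup.subset_closure (Or.inl rfl)
  -- the 3-cycle permutation generator
  set σ : Equiv.Perm (Fin 3) := finRotate 3 with hσ
  have hperm_mul : (σ.permMatrix ℂ) * (σ⁻¹.permMatrix ℂ) = 1 := by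
    rw [Equiv.Perm.permMatrix, Equiv.Perm.permMatrix, ← PEquiv.toMatrix_trans,
      ← Equiv.toPEquiv_trans]
    have h : σ.trans σ⁻¹ = Equiv.refl (Fin 3) := by
      ext x; simp
    rw [h, Equiv.toPEquiv_refl, PEquiv.toMatrix_refl]
  have hperm_mul' : (σ⁻¹.permMatrix ℂ) * (σ.permMatrix ℂ) = 1 := by
    rw [Equiv.Perm.permMatrix, Equiv.Perm.permMatrix, ← PEquiv.toMatrix_trans,
      ← Equiv.toPEquiv_trans]
    have h : σ⁻¹.trans σ = Equiv.refl (Fin 3) := by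
      ext x; simp
    rw [h, Equiv.toPEquiv_refl, PEquiv.toMatrix_refl]
  set cU : GL (Fin 3) ℂ := ⟨σ.permMatrix ℂ, σ⁻¹.permMatrix ℂ, hperm_mul, hperm_mul'⟩
    with hcU
  have hcUmem : cU ∈ hesseGroup ω := Subgroup.subset_closure (Or.inr ⟨σ, rfl⟩)
  -- action of the generators on vectors
  have hn : ∀ v : Fin 3 → ℂ, nM.mulVec v = ![v 0, ω * v 1, ω ^ 2 * v 2] := by
    intro v; funext i
    fin_cases i <;> simp [hnM, Matrix.mulVec_diagonal]
  have hcMexp : σ.permMatrix ℂ = !![0,1,0;0,0,1;(1:ℂ),0,0] := by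
    ext i m
    fin_cases i <;> fin_cases m <;>
      simp [Equiv.Perm.permMatrix, PEquiv.toMatrix, Equiv.toPEquiv, hσ, Matrix.vecHead, Matrix.vecTail]
  have hc : ∀ v : Fin 3 → ℂ, (σ.permMatrix ℂ).mulVec v = ![v 1, v 2, v 0] := by
    intro v; rw [hcMexp]; funext i
    fin_cases i <;>
      simp [Matrix.mulVec, dotProduct, Fin.sum_univ_three, Matrix.vecHead, Matrix.vecTail]
  have e0 : hessePoint ω lam 0 = ![lam, 1, 1] := rfl
  have e1 : hessePoint ω lam 1 = ![1, lam, 1] := rfl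
  have e2 : hessePoint ω lam 2 = ![1, 1, lam] := rfl
  have e3 : hessePoint ω lam 3 = ![lam, ω, ω ^ 2] := rfl
  have e4 : hessePoint ω lam 4 = ![ω ^ 2, lam, ω] := rfl
  have e5 : hessePoint ω lam 5 = ![ω, ω ^ 2, lam] := rfl
  have e6 : hessePoint ω lam 6 = ![lam, ω ^ 2, ω] := rfl
  have e7 : hessePoint ω lam 7 = ![ω, lam, ω ^ 2] := rfl
  have e8 : hessePoint ω lam 8 = ![ω ^ 2, ω, lam] := rfl
  -- the individual moves
  have R03 : hesseRel ω lam 0 3 := by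
    refine ⟨nU, hnUmem, 1, one_ne_zero, ?_⟩
    show nM.mulVec _ = _
    rw [e0, e3, hn]; funext i; fin_cases i <;>
      simp [Matrix.vecHead, Matrix.vecTail] <;>
      first
        | ring1
        | linear_combination hω3
        | linear_combination -hω3
        | linear_combination ω * hω3
        | linear_combination -ω * hω3
        | linear_combination ω ^ 2 * hω3
        | linear_combination -ω ^ 2 * hω3
        | linear_combination lam * hω3
        | linear_combination -lam * hω3
        | linear_combination lam * ω * hω3
        | linear_combination -lam * ω * hω3
        | linear_combination lam * ω ^ 2 * hω3
        | linear_combination -lam * ω ^ 2 * hω3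
  have R36 : hesseRel ω lam 3 6 := by
    refine ⟨nU, hnUmem, 1, one_ne_zero, ?_⟩
    show nM.mulVec _ = _
    rw [e3, e6, hn]; funext i; fin_cases i <;>
      simp [Matrix.vecHead, Matrix.vecTail] <;>
      first
        | ring1
        | linear_combination hω3
        | linear_combination -hω3
        | linear_combination ω * hω3
        | linear_combination -ω * hω3
        | linear_combination ω ^ 2 * hω3
        | linear_combination -ω ^ 2 * hω3
        | linear_combination lam * hω3
        | linear_combination -lam * hω3
        | linear_combination lam * ω * hω3
        | linear_combination -lam * ω * hω3
        | linear_combination lam * ω ^ 2 * hω3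
        | linear_combination -lam * ω ^ 2 * hω3
  have R02 : hesseRel ω lam 0 2 := by
    refine ⟨cU, hcUmem, 1, one_ne_zero, ?_⟩
    show (σ.permMatrix ℂ).mulVec _ = _
    rw [e0, e2, hc]; funext i; fin_cases i <;>
      simp [Matrix.vecHead, Matrix.vecTail] <;>
      first
        | ring1
        | linear_combination hω3
        | linear_combination -hω3
        | linear_combination ω * hω3
        | linear_combination -ω * hω3
        | linear_combination ω ^ 2 * hω3
        | linear_combination -ω ^ 2 * hω3
        | linear_combination lam * hω3
        | linear_combination -lam * hω3
        | linear_combination lam * ω * hω3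
        | linear_combination -lam * ω * hω3
        | linear_combination lam * ω ^ 2 * hω3
        | linear_combination -lam * ω ^ 2 * hω3
  have R21 : hesseRel ω lam 2 1 := by
    refine ⟨cU, hcUmem, 1, one_ne_zero, ?_⟩
    show (σ.permMatrix ℂ).mulVec _ = _
    rw [e2, e1, hc]; funext i; fin_cases i <;>
      simp [Matrix.vecHead, Matrix.vecTail] <;>
      first
        | ring1
        | linear_combination hω3
        | linear_combination -hω3
        | linear_combination ω * hω3
        | linear_combination -ω * hω3
        | linear_combination ω ^ 2 * hω3
        | linear_combination -ω ^ 2 * hω3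
        | linear_combination lam * hω3
        | linear_combination -lam * hω3
        | linear_combination lam * ω * hω3
        | linear_combination -lam * ω * hω3
        | linear_combination lam * ω ^ 2 * hω3
        | linear_combination -lam * ω ^ 2 * hω3
  have R14 : hesseRel ω lam 1 4 := by
    refine ⟨nU, hnUmem, ω, hω0, ?_⟩
    show nM.mulVec _ = _
    rw [e1, e4, hn]; funext i; fin_cases i <;>
      simp [Matrix.vecHead, Matrix.vecTail] <;>
      first
        | ring1
        | linear_combination hω3
        | linear_combination -hω3
        | linear_combination ω * hω3
        | linear_combination -ω * hω3
        | linear_combination ω ^ 2 * hω3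
        | linear_combination -ω ^ 2 * hω3
        | linear_combination lam * hω3
        | linear_combination -lam * hω3
        | linear_combination lam * ω * hω3
        | linear_combination -lam * ω * hω3
        | linear_combination lam * ω ^ 2 * hω3
        | linear_combination -lam * ω ^ 2 * hω3
  have R47 : hesseRel ω lam 4 7 := by
    refine ⟨nU, hnUmem, ω, hω0, ?_⟩
    show nM.mulVec _ = _
    rw [e4, e7, hn]; funext i; fin_cases i <;>
      simp [Matrix.vecHead, Matrix.vecTail] <;>
      first
        | ring1
        | linear_combination hω3
        | linear_combination -hω3
        | linear_combination ω * hω3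
        | linear_combination -ω * hω3
        | linear_combination ω ^ 2 * hω3
        | linear_combination -ω ^ 2 * hω3
        | linear_combination lam * hω3
        | linear_combination -lam * hω3
        | linear_combination lam * ω * hω3
        | linear_combination -lam * ω * hω3
        | linear_combination lam * ω ^ 2 * hω3
        | linear_combination -lam * ω ^ 2 * hω3
  have R25 : hesseRel ω lam 2 5 := by
    refine ⟨nU, hnUmem, ω ^ 2, hω20, ?_⟩
    show nM.mulVec _ = _
    rw [e2, e5, hn]; funext i; fin_cases i <;>
      simp [Matrix.vecHead, Matrix.vecTail] <;>
      first
        | ring1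
        | linear_combination hω3
        | linear_combination -hω3
        | linear_combination ω * hω3
        | linear_combination -ω * hω3
        | linear_combination ω ^ 2 * hω3
        | linear_combination -ω ^ 2 * hω3
        | linear_combination lam * hω3
        | linear_combination -lam * hω3
        | linear_combination lam * ω * hω3
        | linear_combination -lam * ω * hω3
        | linear_combination lam * ω ^ 2 * hω3
        | linear_combination -lam * ω ^ 2 * hω3
  have R58 : hesseRel ω lam 5 8 := by
    refine ⟨nU, hnUmem, ω ^ 2, hω20, ?_⟩
    show nM.mulVec _ = _
    rw [e5, e8, hn]; funext i; fin_cases i <;>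
      simp [Matrix.vecHead, Matrix.vecTail] <;>
      first
        | ring1
        | linear_combination hω3
        | linear_combination -hω3
        | linear_combination ω * hω3
        | linear_combination -ω * hω3
        | linear_combination ω ^ 2 * hω3
        | linear_combination -ω ^ 2 * hω3
        | linear_combination lam * hω3
        | linear_combination -lam * hω3
        | linear_combination lam * ω * hω3
        | linear_combination -lam * ω * hω3
        | linear_combination lam * ω ^ 2 * hω3
        | linear_combination -lam * ω ^ 2 * hω3
  -- p₁ is related to every point
  have h0 : ∀ m : Fin 9, hesseRel ω lam 0 m := by
    intro m
    fin_cases m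
    · exact ⟨1, one_mem _, 1, one_ne_zero, by simp⟩
    · exact hesseRel_trans R02 R21
    · exact R02
    · exact R03
    · exact hesseRel_trans (hesseRel_trans R02 R21) R14
    · exact hesseRel_trans R02 R25
    · exact hesseRel_trans R03 R36
    · exact hesseRel_trans (hesseRel_trans (hesseRel_trans R02 R21) R14) R47
    · exact hesseRel_trans (hesseRel_trans R02 R25) R58
  exact hesseRel_trans (hesseRel_symm (h0 j)) (h0 k)
end
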